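/- (Theorem 2.) Let M modes have number-conserving amplitudes v₁(m̄|n̄) (zero unless |m̄|=|n̄|), let P_in^{r}, P_in^{r'} be product input distributions of squeezed modes with tanh(r_i)/tanh(r'_i) = c for all i, let 0 < η ≤ 1 and η' = 1-(1-η)c, and define the lossy output P_out^{r,η}(m̄) = ∑_{n̄,l̄} v₁(m̄|n̄) conj(v₁(m̄|l̄)) √(P_in^{r,η}(n̄) P_in^{r,η}(l̄)), where P_in^{r,η}(n̄) = ∑_{ī ≥ n̄} ∏_p binom(i_p, n_p) η^{n_p}(1-η)^{i_p-n_p} P_in^{r}(ī). Then P_out^{r',η'}(n̄) = P_out^{r,η}(n̄) · (P^{r'}(|n̄|)/P^{r}(|n̄|)) · (η'/η)^{|n̄|}, where P^{r}(N) (resp. P^{r'}(N)) is the lossless total-photon-number probability ∑_{|n̄|=N} P_in^{r}(n̄). -/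

import Mathlib

/-- Single-mode squeezed vacuum photon-number probability. -/
noncomputable def smssProb (r : ℝ) (n : ℕ) : ℝ :=
  if Even n then
    (1 / Real.cosh r) *
      ((Nat.factorial n : ℝ) / (2 ^ n * (Nat.factorial (n / 2) : ℝ) ^ 2)) *
      Real.tanh r ^ n
  else 0

/-- Product input distribution of `M` squeezed modes. -/
noncomputable def Pin {M : ℕ} (r : Fin M → ℝ) (n : Fin M → ℕ) : ℝ :=
  ∏ i, smssProb (r i) (n i)

/-- Mode-wise binomially thinned input distribution at transmission rate `η`. -/
noncomputable def PinLossy {M : ℕ} (r : Fin M → ℝ) (η : ℝ) (n : Fin M → ℕ) : ℝ :=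
  ∑' i : Fin M → ℕ, if ∀ p, n p ≤ i p then
    (∏ p, ((i p).choose (n p) : ℝ) * η ^ (n p) * (1 - η) ^ (i p - n p)) * Pin r i
  else 0

/-- Lossless total photon-number probability `P^{r}(N) = ∑_{|n̄| = N} P_in^{r}(n̄)`. -/
noncomputable def Ptot {M : ℕ} (r : Fin M → ℝ) (N : ℕ) : ℝ :=
  ∑' n : Fin M → ℕ, if (∑ i, n i) = N then Pin r n else 0


lemma smss_scale (r r' c : ℝ) (hc : c ≠ 0)
    (h : Real.tanh r' = Real.tanh r / c) (i : ℕ) :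
    smssProb r' i = (Real.cosh r / Real.cosh r') * (1 / c) ^ i * smssProb r i := by
  unfold smssProb
  by_cases he : Even i
  · simp only [he, if_true]
    have h1 : Real.cosh r ≠ 0 := (Real.cosh_pos (x := r)).ne'
    have h2 : Real.cosh r' ≠ 0 := (Real.cosh_pos (x := r')).ne'
    rw [h, div_pow, div_pow, one_pow]
    field_simp
  · simp [he]

lemma Pin_scale {M : ℕ} (r r' : Fin M → ℝ) (c : ℝ) (hc : c ≠ 0)
    (h : ∀ p, Real.tanh (r' p) = Real.tanh (r p) / c) (m : Fin M → ℕ) :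
    Pin r' m = (∏ p, Real.cosh (r p) / Real.cosh (r' p)) * (1 / c) ^ (∑ p, m p)
      * Pin r m := by
  unfold Pin
  rw [← Finset.prod_pow_eq_pow_sum, ← Finset.prod_mul_distrib, ← Finset.prod_mul_distrib]
  exact Finset.prod_congr rfl fun p _ => smss_scale (r p) (r' p) c hc (h p) (m p)

lemma Ptot_scale {M : ℕ} (r r' : Fin M → ℝ) (c : ℝ) (hc : c ≠ 0)
    (h : ∀ p, Real.tanh (r' p) = Real.tanh (r p) / c) (N : ℕ) :
    Ptot r' N = ((∏ p, Real.cosh (r p) / Real.cosh (r' p)) * (1 / c) ^ N)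
      * Ptot r N := by
  unfold Ptot
  rw [← tsum_mul_left]
  refine tsum_congr fun m => ?_
  by_cases hm : (∑ i, m i) = N
  · simp only [hm, if_true, Pin_scale r r' c hc h m, hm]
    try ring
  · simp [hm]

lemma mode_factor (η η' c : ℝ) (hc : c ≠ 0) (hη : η ≠ 0) (hη' : η' = 1 - (1 - η) * c)
    {np ip : ℕ} (hle : np ≤ ip) (C : ℝ) :
    C * η' ^ np * (1 - η') ^ (ip - np) * (1 / c) ^ ip
      = (η' / (η * c)) ^ np * (C * η ^ np * (1 - η) ^ (ip - np)) := by
  obtain ⟨k, rfl⟩ := Nat.exists_eq_add_of_le hle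
  have h1 : (1 : ℝ) - η' = (1 - η) * c := by rw [hη']; ring
  rw [Nat.add_sub_cancel_left, h1, mul_pow, pow_add]
  field_simp
  have hck : c ^ k * c⁻¹ ^ k = 1 := by rw [← mul_pow, mul_inv_cancel₀ hc, one_pow]
  have hηn : η ^ np * η⁻¹ ^ np = 1 := by rw [← mul_pow, mul_inv_cancel₀ hη, one_pow]
  linear_combination (C * η' ^ np * c⁻¹ ^ np * (1 - η) ^ k) * hck
    - (C * η' ^ np * c⁻¹ ^ np * (1 - η) ^ k) * hηn

lemma PinLossy_scale {M : ℕ} (r r' : Fin M → ℝ) (c : ℝ) (hc : c ≠ 0)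
    (h : ∀ p, Real.tanh (r' p) = Real.tanh (r p) / c)
    (η η' : ℝ) (hη : η ≠ 0) (hη' : η' = 1 - (1 - η) * c) (n : Fin M → ℕ) :
    PinLossy r' η' n = ((∏ p, Real.cosh (r p) / Real.cosh (r' p))
      * (η' / (η * c)) ^ (∑ p, n p)) * PinLossy r η n := by
  unfold PinLossy
  rw [← tsum_mul_left]
  refine tsum_congr fun i => ?_
  by_cases hi : ∀ p, n p ≤ i p
  · rw [if_pos hi, if_pos hi, Pin_scale r r' c hc h i]
    have key : (∏ p, ((i p).choose (n p) : ℝ) * η' ^ (n p) * (1 - η') ^ (i p - n p))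
        * (1 / c) ^ (∑ p, i p)
        = (η' / (η * c)) ^ (∑ p, n p)
          * ∏ p, ((i p).choose (n p) : ℝ) * η ^ (n p) * (1 - η) ^ (i p - n p) := by
      rw [← Finset.prod_pow_eq_pow_sum, ← Finset.prod_pow_eq_pow_sum,
        ← Finset.prod_mul_distrib, ← Finset.prod_mul_distrib]
      exact Finset.prod_congr rfl fun p _ =>
        mode_factor η η' c hc hη hη' (hi p) _
    calc (∏ p, ((i p).choose (n p) : ℝ) * η' ^ (n p) * (1 - η') ^ (i p - n p))
          * ((∏ p, Real.cosh (r p) / Real.cosh (r' p)) * (1 / c) ^ (∑ p, i p) * Pin r i)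
        = ((∏ p, ((i p).choose (n p) : ℝ) * η' ^ (n p) * (1 - η') ^ (i p - n p))
            * (1 / c) ^ (∑ p, i p)) * ((∏ p, Real.cosh (r p) / Real.cosh (r' p)) * Pin r i) := by
          ring
      _ = _ := by rw [key]; ring
  · rw [if_neg hi, if_neg hi, mul_zero]

/-- Theorem 2. With number-conserving amplitudes `v₁`, inputs with
`tanh(r i)/tanh(r' i) = c`, and `η' = 1-(1-η)c`, the lossy output
distributions satisfy
`P_out^{r',η'}(n̄) = P_out^{r,η}(n̄)·(P^{r'}(|n̄|)/P^{r}(|n̄|))·(η'/η)^{|n̄|}`. -/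
theorem lossy_output_rescaling (M : ℕ) (T : Finset (Fin M → ℕ))
    (v₁ : (Fin M → ℕ) → (Fin M → ℕ) → ℂ)
    (hv : ∀ m n, (∑ i, m i) ≠ (∑ i, n i) → v₁ m n = 0)
    (r r' : Fin M → ℝ) (hr : ∀ i, 0 < r i) (hr' : ∀ i, 0 < r' i)
    (c : ℝ) (hc : 0 < c) (hc1 : c ≤ 1)
    (hratio : ∀ i, Real.tanh (r i) / Real.tanh (r' i) = c)
    (η : ℝ) (hη : 0 < η) (hη1 : η ≤ 1) (η' : ℝ) (hη' : η' = 1 - (1 - η) * c)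
    (Pout P'out : (Fin M → ℕ) → ℂ)
    (hPout : ∀ m, Pout m = ∑ n ∈ T, ∑ l ∈ T,
      v₁ m n * (starRingEnd ℂ) (v₁ m l) *
        (Real.sqrt (PinLossy r η n * PinLossy r η l) : ℝ))
    (hP'out : ∀ m, P'out m = ∑ n ∈ T, ∑ l ∈ T,
      v₁ m n * (starRingEnd ℂ) (v₁ m l) *
        (Real.sqrt (PinLossy r' η' n * PinLossy r' η' l) : ℝ))
    (n : Fin M → ℕ) (hne : Ptot r (∑ i, n i) ≠ 0) :
    P'out n = Pout n * ((Ptot r' (∑ i, n i) / Ptot r (∑ i, n i) : ℝ) : ℂ) *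
      (((η' / η) ^ (∑ i, n i) : ℝ) : ℂ) := by

  have hcne : c ≠ 0 := hc.ne'
  have hηne : η ≠ 0 := hη.ne'
  have htanh : ∀ p, Real.tanh (r' p) = Real.tanh (r p) / c := by
    intro p
    have ht' : Real.tanh (r' p) ≠ 0 := by
      rw [Real.tanh_eq_sinh_div_cosh]
      exact (div_pos (Real.sinh_pos_iff.2 (hr' p)) (Real.cosh_pos (r' p))).ne'
    have h0 := hratio p
    rw [div_eq_iff ht'] at h0
    rw [eq_div_iff hcne]
    linarith
  set N := ∑ i, n i with hN
  set D := ∏ p, Real.cosh (r p) / Real.cosh (r' p) with hD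
  have hDpos : 0 < D := Finset.prod_pos fun p _ => div_pos (Real.cosh_pos (r p)) (Real.cosh_pos (r' p))
  have hη'pos : 0 < η' := by nlinarith
  set ρ := η' / (η * c) with hρ
  have hρpos : 0 < ρ := div_pos hη'pos (mul_pos hη hc)
  set K := D * ρ ^ N with hK
  have hKpos : 0 < K := mul_pos hDpos (pow_pos hρpos N)
  have hscale : ∀ a : Fin M → ℕ, (∑ i, a i) = N →
      PinLossy r' η' a = K * PinLossy r η a := by
    intro a ha
    rw [PinLossy_scale r r' c hcne htanh η η' hηne hη' a, ha]
  have hmain : P'out n = (K : ℂ) * Pout n := by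
    rw [hP'out, hPout, Finset.mul_sum]
    refine Finset.sum_congr rfl fun a ha => ?_
    rw [Finset.mul_sum]
    refine Finset.sum_congr rfl fun b hb => ?_
    by_cases hA : (∑ i, a i) = N
    · by_cases hB : (∑ i, b i) = N
      · rw [hscale a hA, hscale b hB,
          show K * PinLossy r η a * (K * PinLossy r η b)
            = K ^ 2 * (PinLossy r η a * PinLossy r η b) by ring,
          Real.sqrt_mul (sq_nonneg K), Real.sqrt_sq hKpos.le]
        push_cast
        ring
      · rw [hv n b (by rw [← hN]; exact fun hh => hB hh.symm)]
        simp
    · rw [hv n a (by rw [← hN]; exact fun hh => hA hh.symm)]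
      simp
  have hfac : K = D * (1 / c) ^ N * (η' / η) ^ N := by
    rw [hK, hρ, show η' / (η * c) = (η' / η) * (1 / c) by field_simp, mul_pow]
    ring
  rw [hmain, Ptot_scale r r' c hcne htanh N,
    mul_div_assoc, div_self hne, mul_one, hfac, Complex.ofReal_mul]
  ring
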